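/- If ⟨M₁,M₂⟩ ⇒_E N, then there exist Q₁, Q₂ such that N x →_R* ⟨Q₁ x, Q₂ x⟩, M₁ ⇒_E Q₁, and M₂ ⇒_E Q₂. -/

import Mathlib

/-- Untyped lambda terms with pairing and projections, de Bruijn representation
(so terms are automatically identified up to alpha-equivalence). -/
inductive Tm : Type
  | var : Nat → Tm
  | app : Tm → Tm → Tm
  | lam : Tm → Tm
  | pair : Tm → Tm → Tm
  | p1 : Tm → Tm
  | p2 : Tm → Tm

/-- Shift free de Bruijn indices ≥ d up by one. -/
def Tm.lift (d : Nat) : Tm → Tm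
  | .var n => if n < d then .var n else .var (n + 1)
  | .app a b => .app (a.lift d) (b.lift d)
  | .lam a => .lam (a.lift (d + 1))
  | .pair a b => .pair (a.lift d) (b.lift d)
  | .p1 a => .p1 (a.lift d)
  | .p2 a => .p2 (a.lift d)

/-- Capture-avoiding substitution of s for variable k. -/
def Tm.subst : Tm → Nat → Tm → Tm
  | .var n, k, s => if n = k then s else if n < k then .var n else .var (n - 1)
  | .app a b, k, s => .app (a.subst k s) (b.subst k s)
  | .lam a, k, s => .lam (a.subst (k + 1) (s.lift 0))
  | .pair a b, k, s => .pair (a.subst k s) (b.subst k s)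
  | .p1 a, k, s => .p1 (a.subst k s)
  | .p2 a, k, s => .p2 (a.subst k s)

/-- One-step R-reduction: compatible closure of (β), (π₁), (π₂), (δπ), (π₁λ), (π₂λ). -/
inductive StepR : Tm → Tm → Prop
  | beta {M N} : StepR (.app (.lam M) N) (M.subst 0 N)
  | pi1 {M N} : StepR (.p1 (.pair M N)) M
  | pi2 {M N} : StepR (.p2 (.pair M N)) N
  | dpi {M N P} : StepR (.app (.pair M N) P) (.pair (.app M P) (.app N P))
  | pi1lam {M} : StepR (.p1 (.lam M)) (.lam (.p1 M))
  | pi2lam {M} : StepR (.p2 (.lam M)) (.lam (.p2 M))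
  | lam {M M'} : StepR M M' → StepR (.lam M) (.lam M')
  | appL {M M' N} : StepR M M' → StepR (.app M N) (.app M' N)
  | appR {M N N'} : StepR N N' → StepR (.app M N) (.app M N')
  | pairL {M M' N} : StepR M M' → StepR (.pair M N) (.pair M' N)
  | pairR {M N N'} : StepR N N' → StepR (.pair M N) (.pair M N')
  | p1 {M M'} : StepR M M' → StepR (.p1 M) (.p1 M')
  | p2 {M M'} : StepR M M' → StepR (.p2 M) (.p2 M')

/-- Parallel η/SP-expansion. -/
inductive ParE : Tm → Tm → Prop
  | refl {M} : ParE M M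
  | lam {M M'} : ParE M M' → ParE (.lam M) (.lam M')
  | app {M M' N N'} : ParE M M' → ParE N N' → ParE (.app M N) (.app M' N')
  | pair {M M' N N'} : ParE M M' → ParE N N' → ParE (.pair M N) (.pair M' N')
  | p1 {M M'} : ParE M M' → ParE (.p1 M) (.p1 M')
  | p2 {M M'} : ParE M M' → ParE (.p2 M) (.p2 M')
  | eta {M M'} : ParE M M' → ParE M (.lam (.app (M'.lift 0) (.var 0)))
  | sp {M M'} : ParE M M' → ParE M (.pair (.p1 M') (.p2 M'))

theorem Tm.lift_lift (T : Tm) : ∀ i j, i ≤ j → (T.lift i).lift (j+1) = (T.lift j).lift i := by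
  induction T with
  | var n =>
    intro i j hij
    by_cases h1 : n < i
    · have h2 : n < j := lt_of_lt_of_le h1 hij
      simp [Tm.lift, h1, h2, Nat.lt_succ_of_lt h2]
    · by_cases h2 : n < j
      · simp [Tm.lift, h1, h2, Nat.succ_lt_succ h2]
      · have h3 : ¬ n + 1 < j + 1 := by omega
        have h4 : ¬ n + 1 < i := by omega
        simp [Tm.lift, h1, h2, h3, h4]
  | app a b iha ihb => intro i j hij; simp [Tm.lift, iha i j hij, ihb i j hij]
  | lam a iha => intro i j hij; simp [Tm.lift, iha (i+1) (j+1) (by omega)]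
  | pair a b iha ihb => intro i j hij; simp [Tm.lift, iha i j hij, ihb i j hij]
  | p1 a iha => intro i j hij; simp [Tm.lift, iha i j hij]
  | p2 a iha => intro i j hij; simp [Tm.lift, iha i j hij]

theorem Tm.subst_lift (T : Tm) : ∀ k s, (T.lift k).subst k s = T := by
  induction T with
  | var n =>
    intro k s
    by_cases h1 : n < k
    · simp [Tm.lift, h1, Tm.subst, Nat.ne_of_lt h1]
    · have h2 : ¬ n + 1 = k := by omega
      have h3 : ¬ n + 1 < k := by omega
      simp [Tm.lift, h1, Tm.subst, h2, h3]
  | app a b iha ihb => intro k s; simp [Tm.lift, Tm.subst, iha, ihb]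
  | lam a iha => intro k s; simp [Tm.lift, Tm.subst, iha]
  | pair a b iha ihb => intro k s; simp [Tm.lift, Tm.subst, iha, ihb]
  | p1 a iha => intro k s; simp [Tm.lift, Tm.subst, iha]
  | p2 a iha => intro k s; simp [Tm.lift, Tm.subst, iha]

theorem ParE.lift_par {M M' : Tm} (h : ParE M M') : ∀ d, ParE (M.lift d) (M'.lift d) := by
  induction h with
  | refl => intro d; exact ParE.refl
  | lam _ ih => intro d; exact ParE.lam (ih (d+1))
  | app _ _ ih1 ih2 => intro d; exact ParE.app (ih1 d) (ih2 d)
  | pair _ _ ih1 ih2 => intro d; exact ParE.pair (ih1 d) (ih2 d)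
  | p1 _ ih => intro d; exact ParE.p1 (ih d)
  | p2 _ ih => intro d; exact ParE.p2 (ih d)
  | @eta A A' _ ih =>
    intro d
    have e : ((Tm.lam (.app (A'.lift 0) (.var 0))).lift d)
        = .lam (.app ((A'.lift d).lift 0) (.var 0)) := by
      simp [Tm.lift, Nat.succ_pos, A'.lift_lift 0 d (Nat.zero_le d)]
    rw [e]
    exact ParE.eta (ih d)
  | sp _ ih => intro d; exact ParE.sp (ih d)

/-- The key computation for the β-step in the eta case. -/
theorem beta_eta (A : Tm) :
    (Tm.app ((A.lift 0).lift 1) (.var 0)).subst 0 (.var 0) = .app (A.lift 0) (.var 0) := by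
  have e1 : (A.lift 0).lift 1 = (A.lift 0).lift 0 := A.lift_lift 0 0 le_rfl
  simp [Tm.subst, e1, Tm.subst_lift]

theorem key : ∀ {S N : Tm}, ParE S N → ∀ M₁ M₂ : Tm, S = .pair M₁ M₂ →
    (∃ Q₁ Q₂, Relation.ReflTransGen StepR (.app (N.lift 0) (.var 0))
        (.pair (.app Q₁ (.var 0)) (.app Q₂ (.var 0))) ∧
      ParE (M₁.lift 0) Q₁ ∧ ParE (M₂.lift 0) Q₂) ∧
    (∃ Q₁ Q₂, Relation.ReflTransGen StepR (.app (.p1 (N.lift 0)) (.var 0)) (.app Q₁ (.var 0)) ∧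
      Relation.ReflTransGen StepR (.app (.p2 (N.lift 0)) (.var 0)) (.app Q₂ (.var 0)) ∧
      ParE (M₁.lift 0) Q₁ ∧ ParE (M₂.lift 0) Q₂) := by
  intro S N h
  induction h with
  | @refl M =>
    rintro M₁ M₂ rfl
    constructor
    · exact ⟨M₁.lift 0, M₂.lift 0,
        Relation.ReflTransGen.single StepR.dpi, ParE.refl, ParE.refl⟩
    · exact ⟨M₁.lift 0, M₂.lift 0,
        Relation.ReflTransGen.single (StepR.appL StepR.pi1),
        Relation.ReflTransGen.single (StepR.appL StepR.pi2), ParE.refl, ParE.refl⟩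
  | @lam A A' hA ih => intro M₁ M₂ hEq; cases hEq
  | @app A A' B B' hA hB ih1 ih2 => intro M₁ M₂ hEq; cases hEq
  | @p1 A A' hA ih => intro M₁ M₂ hEq; cases hEq
  | @p2 A A' hA ih => intro M₁ M₂ hEq; cases hEq
  | @pair A A' B B' hA hB ih1 ih2 =>
    rintro M₁ M₂ hEq
    injection hEq with e1 e2
    subst e1; subst e2
    constructor
    · exact ⟨A'.lift 0, B'.lift 0, Relation.ReflTransGen.single StepR.dpi,
        hA.lift_par 0, hB.lift_par 0⟩
    · exact ⟨A'.lift 0, B'.lift 0,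
        Relation.ReflTransGen.single (StepR.appL StepR.pi1),
        Relation.ReflTransGen.single (StepR.appL StepR.pi2),
        hA.lift_par 0, hB.lift_par 0⟩
  | @eta S N' hN ih =>
    rintro M₁ M₂ rfl
    obtain ⟨⟨Q₁, Q₂, hred, hp1, hp2⟩, -⟩ := ih M₁ M₂ rfl
    have elift : ((Tm.lam (.app (N'.lift 0) (.var 0))).lift 0)
        = .lam (.app ((N'.lift 0).lift 1) (.var 0)) := by
      simp [Tm.lift]
    constructor
    · refine ⟨Q₁, Q₂, ?_, hp1, hp2⟩
      rw [elift]
      have step1 : StepR (.app (.lam (.app ((N'.lift 0).lift 1) (.var 0))) (.var 0))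
          (.app (N'.lift 0) (.var 0)) := by
        have := @StepR.beta (.app ((N'.lift 0).lift 1) (.var 0)) (.var 0)
        rwa [beta_eta] at this
      exact Relation.ReflTransGen.head step1 hred
    · refine ⟨Q₁, Q₂, ?_, ?_, hp1, hp2⟩
      all_goals rw [elift]
      · -- app (p1 (lam B)) x →* app Q₁ x
        have s1 : StepR (.app (.p1 (.lam (.app ((N'.lift 0).lift 1) (.var 0)))) (.var 0))
            (.app (.lam (.p1 (.app ((N'.lift 0).lift 1) (.var 0)))) (.var 0)) :=
          StepR.appL StepR.pi1lam
        have s2 : StepR (.app (.lam (.p1 (.app ((N'.lift 0).lift 1) (.var 0)))) (.var 0))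
            (.p1 (.app (N'.lift 0) (.var 0))) := by
          have := @StepR.beta (.p1 (.app ((N'.lift 0).lift 1) (.var 0))) (.var 0)
          rwa [show (Tm.p1 (.app ((N'.lift 0).lift 1) (.var 0))).subst 0 (.var 0)
              = .p1 ((Tm.app ((N'.lift 0).lift 1) (.var 0)).subst 0 (.var 0)) from rfl,
            beta_eta N'] at this
        have s3 : Relation.ReflTransGen StepR (.p1 (.app (N'.lift 0) (.var 0)))
            (.p1 (.pair (.app Q₁ (.var 0)) (.app Q₂ (.var 0)))) :=
          Relation.ReflTransGen.lift Tm.p1 (fun _ _ hs => StepR.p1 hs) _ _ hred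
        exact (Relation.ReflTransGen.head s1 (Relation.ReflTransGen.head s2
          (s3.trans (Relation.ReflTransGen.single StepR.pi1))))
      · have s1 : StepR (.app (.p2 (.lam (.app ((N'.lift 0).lift 1) (.var 0)))) (.var 0))
            (.app (.lam (.p2 (.app ((N'.lift 0).lift 1) (.var 0)))) (.var 0)) :=
          StepR.appL StepR.pi2lam
        have s2 : StepR (.app (.lam (.p2 (.app ((N'.lift 0).lift 1) (.var 0)))) (.var 0))
            (.p2 (.app (N'.lift 0) (.var 0))) := by
          have := @StepR.beta (.p2 (.app ((N'.lift 0).lift 1) (.var 0))) (.var 0)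
          rwa [show (Tm.p2 (.app ((N'.lift 0).lift 1) (.var 0))).subst 0 (.var 0)
              = .p2 ((Tm.app ((N'.lift 0).lift 1) (.var 0)).subst 0 (.var 0)) from rfl,
            beta_eta N'] at this
        have s3 : Relation.ReflTransGen StepR (.p2 (.app (N'.lift 0) (.var 0)))
            (.p2 (.pair (.app Q₁ (.var 0)) (.app Q₂ (.var 0)))) :=
          Relation.ReflTransGen.lift Tm.p2 (fun _ _ hs => StepR.p2 hs) _ _ hred
        exact (Relation.ReflTransGen.head s1 (Relation.ReflTransGen.head s2
          (s3.trans (Relation.ReflTransGen.single StepR.pi2))))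
  | @sp S N' hN ih =>
    rintro M₁ M₂ rfl
    obtain ⟨-, ⟨Q₁, Q₂, hr1, hr2, hp1, hp2⟩⟩ := ih M₁ M₂ rfl
    have elift : ((Tm.pair (.p1 N') (.p2 N')).lift 0)
        = .pair (.p1 (N'.lift 0)) (.p2 (N'.lift 0)) := by simp [Tm.lift]
    constructor
    · refine ⟨Q₁, Q₂, ?_, hp1, hp2⟩
      rw [elift]
      have step1 : StepR (.app (.pair (.p1 (N'.lift 0)) (.p2 (N'.lift 0))) (.var 0))
          (.pair (.app (.p1 (N'.lift 0)) (.var 0)) (.app (.p2 (N'.lift 0)) (.var 0))) :=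
        StepR.dpi
      have c1 : Relation.ReflTransGen StepR
          (.pair (.app (.p1 (N'.lift 0)) (.var 0)) (.app (.p2 (N'.lift 0)) (.var 0)))
          (.pair (.app Q₁ (.var 0)) (.app (.p2 (N'.lift 0)) (.var 0))) :=
        Relation.ReflTransGen.lift (fun t => Tm.pair t (.app (.p2 (N'.lift 0)) (.var 0)))
          (fun _ _ hs => StepR.pairL hs) _ _ hr1
      have c2 : Relation.ReflTransGen StepR
          (.pair (.app Q₁ (.var 0)) (.app (.p2 (N'.lift 0)) (.var 0)))
          (.pair (.app Q₁ (.var 0)) (.app Q₂ (.var 0))) :=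
        Relation.ReflTransGen.lift (fun t => Tm.pair (.app Q₁ (.var 0)) t)
          (fun _ _ hs => StepR.pairR hs) _ _ hr2
      exact Relation.ReflTransGen.head step1 (c1.trans c2)
    · refine ⟨Q₁, Q₂, ?_, ?_, hp1, hp2⟩
      · rw [elift]
        exact Relation.ReflTransGen.head (StepR.appL StepR.pi1) hr1
      · rw [elift]
        exact Relation.ReflTransGen.head (StepR.appL StepR.pi2) hr2

/-- If ⟨M₁,M₂⟩ ⇒_E N then N x →_R* ⟨Q₁ x, Q₂ x⟩ with M₁ ⇒_E Q₁ and M₂ ⇒_E Q₂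
(the fresh variable x is rendered as de Bruijn index 0, all terms lifted accordingly). -/
theorem parE_pair_app (M₁ M₂ N : Tm) (h : ParE (.pair M₁ M₂) N) :
    ∃ Q₁ Q₂, Relation.ReflTransGen StepR (.app (N.lift 0) (.var 0))
        (.pair (.app Q₁ (.var 0)) (.app Q₂ (.var 0))) ∧
      ParE (M₁.lift 0) Q₁ ∧ ParE (M₂.lift 0) Q₂ := by
  exact (key h M₁ M₂ rfl).1
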